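/- Let D ≥ 1, θ > 0, N ∈ ℕ, and u, v ∈ ℝ^D. Then the moments of the Maxwell–Boltzmann distribution up to order N are unchanged by N-th order truncation in the fluid velocity: for every m ≤ N, ∫_{ℝ^D} (c·v)^m f^{eq,(N)}_u(c) dc = ∫_{ℝ^D} (c·v)^m f^eq_u(c) dc. -/

import Mathlib

open MeasureTheory Real Finset

/-- The Maxwell–Boltzmann equilibrium distribution with unit density, fluid
velocity `u` and temperature `θ`: `f^eq_u(c) = (2πθ)^{-D/2} exp(-‖c-u‖²/(2θ))`. -/
noncomputable def maxwellBoltzmann (D : ℕ) (θ : ℝ) (u c : EuclideanSpace ℝ (Fin D)) : ℝ :=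
  (2 * π * θ) ^ (-(D : ℝ) / 2) * Real.exp (-‖c - u‖ ^ 2 / (2 * θ))

/-- The `N`-th order truncation of the Maxwell–Boltzmann distribution in the
fluid velocity `u`: the sum of the homogeneous parts of degree `≤ N` in `u`,
`f^{eq,(N)}_u(c) = ∑_{n=0}^N (1/n!) (d^n/dt^n)|_{t=0} f^eq_{tu}(c)`. -/
noncomputable def maxwellBoltzmannTrunc (D : ℕ) (θ : ℝ) (N : ℕ)
    (u c : EuclideanSpace ℝ (Fin D)) : ℝ :=
  ∑ n ∈ Finset.range (N + 1), (1 / (n.factorial : ℝ)) *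
    iteratedDeriv n (fun t : ℝ => maxwellBoltzmann D θ (t • u) c) 0

/-- coefficient of `t^n` in `exp (b*t + g*t^2)` -/
noncomputable def MBdco (b g : ℝ) (n : ℕ) : ℝ :=
  ∑ kl ∈ Finset.HasAntidiagonal.antidiagonal n,
    (b ^ kl.1 / kl.1.factorial) *
      (if Even kl.2 then g ^ (kl.2 / 2) / (kl.2 / 2).factorial else 0)

lemma MB_hasSum_exp (x : ℝ) : HasSum (fun n : ℕ => x ^ n / n.factorial) (Real.exp x) := by
  rw [Real.exp_eq_exp_ℝ]
  exact NormedSpace.expSeries_div_hasSum_exp x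

lemma MB_hasSum_exp_even (x : ℝ) :
    HasSum (fun j : ℕ => if Even j then x ^ (j / 2) / (j / 2).factorial else 0) (Real.exp x) := by
  have hinj : Function.Injective (fun k : ℕ => 2 * k) := fun a b h => by
    simp only [] at h; omega
  have hzero : ∀ j, j ∉ Set.range (fun k : ℕ => 2 * k) →
      (if Even j then x ^ (j / 2) / (j / 2).factorial else 0) = 0 := by
    intro j hj
    rw [if_neg]
    intro ⟨k, hk⟩
    exact hj ⟨k, by show 2 * k = j; omega⟩
  rw [← Function.Injective.hasSum_iff hinj hzero]
  have : ((fun j : ℕ => if Even j then x ^ (j / 2) / (j / 2).factorial else 0) ∘ fun k => 2 * k)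
      = fun k : ℕ => x ^ k / k.factorial := by
    funext k
    simp only [Function.comp_apply]
    rw [if_pos ⟨k, by omega⟩, Nat.mul_div_cancel_left k (by norm_num)]
  rw [this]
  exact MB_hasSum_exp x

lemma MB_hasSum_dco (b g t : ℝ) :
    HasSum (fun n : ℕ => MBdco b g n * t ^ n) (Real.exp (b * t + g * t ^ 2)) := by
  set f : ℕ → ℝ := fun i => (b * t) ^ i / i.factorial with hf_def
  set h : ℕ → ℝ := fun j => if Even j then (g * t ^ 2) ^ (j / 2) / (j / 2).factorial else 0
    with hh_def
  have hf : HasSum f (Real.exp (b * t)) := MB_hasSum_exp _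
  have hh : HasSum h (Real.exp (g * t ^ 2)) := MB_hasSum_exp_even _
  have hfn : Summable fun i => ‖f i‖ := by
    have : (fun i => ‖f i‖) = fun i => |b * t| ^ i / i.factorial := by
      funext i
      simp [hf_def, abs_div, abs_pow, abs_mul, Nat.abs_cast]
    rw [this]
    exact (MB_hasSum_exp _).summable
  have hhn : Summable fun j => ‖h j‖ := by
    have : (fun j => ‖h j‖)
        = fun j => if Even j then |g * t ^ 2| ^ (j / 2) / (j / 2).factorial else 0 := by
      funext j
      by_cases hj : Even j <;>
        simp [hh_def, hj, abs_div, abs_pow, abs_mul, sq_abs, Nat.abs_cast]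
    rw [this]
    exact (MB_hasSum_exp_even _).summable
  have hsum : Summable fun n => ∑ kl ∈ Finset.HasAntidiagonal.antidiagonal n, f kl.1 * h kl.2 :=
    (summable_norm_sum_mul_antidiagonal_of_summable_norm hfn hhn).of_norm
  have key : ∀ n : ℕ, ∑ kl ∈ Finset.HasAntidiagonal.antidiagonal n, f kl.1 * h kl.2 = MBdco b g n * t ^ n := by
    intro n
    rw [MBdco, Finset.sum_mul]
    apply Finset.sum_congr rfl
    rintro ⟨i, j⟩ hij
    rw [Finset.HasAntidiagonal.mem_antidiagonal] at hij
    simp only at hij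
    by_cases hj : Even j
    · obtain ⟨l, rfl⟩ := hj
      have he : Even (l + l) := ⟨l, rfl⟩
      have hl : (l + l) / 2 = l := by omega
      simp only [hf_def, hh_def, if_pos he, hl, ← hij]
      rw [mul_pow]
      field_simp
      ring
    · simp [hh_def, hj]
  have htsum : HasSum (fun n => MBdco b g n * t ^ n)
      (Real.exp (b * t) * Real.exp (g * t ^ 2)) := by
    have := tsum_mul_tsum_eq_tsum_sum_antidiagonal_of_summable_norm hfn hhn
    rw [hf.tsum_eq, hh.tsum_eq] at this
    have h2 : HasSum (fun n => ∑ kl ∈ Finset.HasAntidiagonal.antidiagonal n, f kl.1 * h kl.2)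
        (Real.exp (b * t) * Real.exp (g * t ^ 2)) := by
      rw [this]
      exact hsum.hasSum
    exact (funext key : _ = fun n => MBdco b g n * t ^ n) ▸ h2
  rw [← Real.exp_add] at htsum
  exact htsum

lemma MBdco_nonneg {b g : ℝ} (hb : 0 ≤ b) (hg : 0 ≤ g) (n : ℕ) : 0 ≤ MBdco b g n := by
  apply Finset.sum_nonneg
  intro kl _
  apply mul_nonneg (by positivity)
  split <;> positivity

lemma abs_MBdco_le (b g : ℝ) (n : ℕ) : |MBdco b g n| ≤ MBdco |b| |g| n := by
  refine (Finset.abs_sum_le_sum_abs _ _).trans (Finset.sum_le_sum fun kl _ => ?_)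
  rw [abs_mul, abs_div, abs_pow, Nat.abs_cast]
  apply mul_le_mul_of_nonneg_left ?_ (by positivity)
  by_cases hj : Even kl.2 <;>
    simp [hj, abs_div, abs_pow, Nat.abs_cast]

lemma MBdco_mul_pow_le {b g t : ℝ} (hb : 0 ≤ b) (hg : 0 ≤ g) (ht : 0 ≤ t) (n : ℕ) :
    MBdco b g n * t ^ n ≤ Real.exp (b * t + g * t ^ 2) :=
  le_hasSum (MB_hasSum_dco b g t) n fun m _ =>
    mul_nonneg (MBdco_nonneg hb hg m) (by positivity)

lemma MB_iteratedDeriv (E b g : ℝ) (n : ℕ) :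
    iteratedDeriv n (fun t : ℝ => E * Real.exp (b * t + g * t ^ 2)) 0
      = n.factorial * (E * MBdco b g n) := by
  set p := FormalMultilinearSeries.ofScalars ℝ (fun k => E * MBdco b g k) with hp
  have hnorm : ∀ k, ‖p k‖ ≤ |E| * MBdco |b| |g| k := by
    intro k
    have hpk : p k = (E * MBdco b g k) • ContinuousMultilinearMap.mkPiAlgebraFin ℝ k ℝ := rfl
    rw [hpk]
    refine (norm_smul_le (E * MBdco b g k) (ContinuousMultilinearMap.mkPiAlgebraFin ℝ k ℝ)).trans ?_
    rw [ContinuousMultilinearMap.norm_mkPiAlgebraFin, mul_one, Real.norm_eq_abs, abs_mul]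
    exact mul_le_mul_of_nonneg_left (abs_MBdco_le b g k) (abs_nonneg _)
  have hball : HasFPowerSeriesOnBall (fun t : ℝ => E * Real.exp (b * t + g * t ^ 2)) p 0 ⊤ := by
    constructor
    · refine le_of_eq (p.radius_eq_top_of_summable_norm ?_).symm
      intro r
      refine Summable.of_nonneg_of_le (fun k => by positivity) (fun k => ?_)
        (((MB_hasSum_dco |b| |g| r).summable).mul_left |E|)
      calc ‖p k‖ * (r : ℝ) ^ k ≤ (|E| * MBdco |b| |g| k) * (r : ℝ) ^ k :=
            mul_le_mul_of_nonneg_right (hnorm k) (by positivity)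
      _ = |E| * (MBdco |b| |g| k * (r : ℝ) ^ k) := by ring
    · simp
    · intro y _
      have h1 := (MB_hasSum_dco b g y).mul_left E
      have hco : ∀ k, (FormalMultilinearSeries.ofScalars ℝ fun k => E * MBdco b g k).coeff k
          = E * MBdco b g k := by
        intro k
        simp [FormalMultilinearSeries.coeff, FormalMultilinearSeries.ofScalars, smul_eq_mul,
          Pi.one_def, List.ofFn_const, List.prod_replicate, one_pow]
      simpa [hp, hco, smul_eq_mul, mul_assoc, mul_comm, mul_left_comm] using h1
  have h2 := hball.factorial_smul (1 : ℝ) n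
  rw [iteratedDeriv_eq_iteratedFDeriv, ← h2]
  have hpn : p n = (E * MBdco b g n) • ContinuousMultilinearMap.mkPiAlgebraFin ℝ n ℝ := rfl
  rw [hpn]
  simp [smul_eq_mul, nsmul_eq_mul]

open scoped RealInnerProductSpace

lemma MB_decomp (D : ℕ) {θ : ℝ} (hθ : 0 < θ) (u c : EuclideanSpace ℝ (Fin D)) (t : ℝ) :
    maxwellBoltzmann D θ (t • u) c
      = ((2 * π * θ) ^ (-(D : ℝ) / 2) * Real.exp (-‖c‖ ^ 2 / (2 * θ)))
        * Real.exp ((⟪c, u⟫ / θ) * t + (-‖u‖ ^ 2 / (2 * θ)) * t ^ 2) := by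
  have hexp : ‖c - t • u‖ ^ 2 = ‖c‖ ^ 2 - 2 * (t * ⟪c, u⟫) + t ^ 2 * ‖u‖ ^ 2 := by
    rw [norm_sub_sq_real, real_inner_smul_right, norm_smul]
    simp only [Real.norm_eq_abs, mul_pow, sq_abs]
  have hexp2 : -‖c - t • u‖ ^ 2 / (2 * θ)
      = -‖c‖ ^ 2 / (2 * θ) + ((⟪c, u⟫ / θ) * t + (-‖u‖ ^ 2 / (2 * θ)) * t ^ 2) := by
    rw [hexp]
    field_simp
    ring
  unfold maxwellBoltzmann
  rw [hexp2, Real.exp_add, ← mul_assoc]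

lemma MB_integrable_exp {D : ℕ} {θ : ℝ} (hθ : 0 < θ) (w : EuclideanSpace ℝ (Fin D)) :
    Integrable (fun c : EuclideanSpace ℝ (Fin D) =>
      Real.exp (⟪c, w⟫ - ‖c‖ ^ 2 / (2 * θ))) := by
  have hb : (0 : ℝ) < 1 / (2 * θ) := by positivity
  have h := GaussianFourier.integrable_cexp_neg_mul_sq_norm_add
    (V := EuclideanSpace ℝ (Fin D)) (b := ((1 / (2 * θ) : ℝ) : ℂ)) (by simpa using hb) 1 w
  apply h.norm.congr
  filter_upwards with c
  rw [Complex.norm_exp]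
  congr 1
  simp only [Complex.add_re, Complex.neg_re, Complex.mul_re, Complex.one_re, Complex.one_im,
    Complex.ofReal_re, Complex.ofReal_im, Complex.ofReal_pow]
  rw [real_inner_comm]
  push_cast
  simp
  rw [← Complex.ofReal_pow, Complex.ofReal_re]
  ring

lemma MB_pow_le (x : ℝ) (k : ℕ) : |x| ^ k ≤ k.factorial * Real.exp |x| := by
  have h := Real.pow_div_factorial_le_exp |x| (abs_nonneg x) k
  rw [div_le_iff₀ (by positivity : (0 : ℝ) < k.factorial)] at h
  linarith

lemma MB_exp_abs_le (x : ℝ) : Real.exp |x| ≤ Real.exp x + Real.exp (-x) := by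
  rcases abs_cases x with ⟨h, _⟩ | ⟨h, _⟩ <;> rw [h] <;>
    linarith [Real.exp_pos (-x), Real.exp_pos x]

lemma MB_integrable_poly {D : ℕ} {θ : ℝ} (hθ : 0 < θ) (m i : ℕ)
    (v₁ v₂ w : EuclideanSpace ℝ (Fin D)) :
    Integrable (fun c : EuclideanSpace ℝ (Fin D) =>
      |⟪c, v₁⟫| ^ m * |⟪c, v₂⟫| ^ i * Real.exp (⟪c, w⟫ - ‖c‖ ^ 2 / (2 * θ))) := by
  have hg : Integrable (fun c : EuclideanSpace ℝ (Fin D) =>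
      (m.factorial * i.factorial : ℝ) *
      ((Real.exp (⟪c, w + v₁ + v₂⟫ - ‖c‖ ^ 2 / (2 * θ))
        + Real.exp (⟪c, w + v₁ - v₂⟫ - ‖c‖ ^ 2 / (2 * θ)))
       + (Real.exp (⟪c, w - v₁ + v₂⟫ - ‖c‖ ^ 2 / (2 * θ))
        + Real.exp (⟪c, w - v₁ - v₂⟫ - ‖c‖ ^ 2 / (2 * θ))))) :=
    ((((MB_integrable_exp hθ _).add (MB_integrable_exp hθ _)).add
      ((MB_integrable_exp hθ _).add (MB_integrable_exp hθ _))).const_mul _)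
  have hc1 : Continuous fun c : EuclideanSpace ℝ (Fin D) => ⟪c, v₁⟫ :=
    continuous_id.inner continuous_const
  have hc2 : Continuous fun c : EuclideanSpace ℝ (Fin D) => ⟪c, v₂⟫ :=
    continuous_id.inner continuous_const
  have hc3 : Continuous fun c : EuclideanSpace ℝ (Fin D) => ⟪c, w⟫ :=
    continuous_id.inner continuous_const
  refine hg.mono' (Continuous.aestronglyMeasurable
    (((hc1.abs.pow m).mul (hc2.abs.pow i)).mul
      (Real.continuous_exp.comp (hc3.sub ((continuous_norm.pow 2).div_const (2 * θ)))))) ?_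
  filter_upwards with c
  have key : ∀ s1 s2 : ℝ, Real.exp (⟪c, w⟫ + s1 + s2 - ‖c‖ ^ 2 / (2 * θ))
      = Real.exp s1 * Real.exp s2 * Real.exp (⟪c, w⟫ - ‖c‖ ^ 2 / (2 * θ)) := by
    intro s1 s2
    rw [← Real.exp_add, ← Real.exp_add]
    congr 1
    ring
  rw [Real.norm_eq_abs, abs_of_nonneg (by positivity)]
  simp only [inner_add_right, inner_sub_right]
  have harg1 : ⟪c, w⟫ + ⟪c, v₁⟫ - ⟪c, v₂⟫ - ‖c‖ ^ 2 / (2 * θ)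
      = ⟪c, w⟫ + ⟪c, v₁⟫ + (-⟪c, v₂⟫) - ‖c‖ ^ 2 / (2 * θ) := by ring
  have harg2 : ⟪c, w⟫ - ⟪c, v₁⟫ + ⟪c, v₂⟫ - ‖c‖ ^ 2 / (2 * θ)
      = ⟪c, w⟫ + (-⟪c, v₁⟫) + ⟪c, v₂⟫ - ‖c‖ ^ 2 / (2 * θ) := by ring
  have harg3 : ⟪c, w⟫ - ⟪c, v₁⟫ - ⟪c, v₂⟫ - ‖c‖ ^ 2 / (2 * θ)
      = ⟪c, w⟫ + (-⟪c, v₁⟫) + (-⟪c, v₂⟫) - ‖c‖ ^ 2 / (2 * θ) := by ring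
  rw [harg1, harg2, harg3, key ⟪c, v₁⟫ ⟪c, v₂⟫, key ⟪c, v₁⟫ (-⟪c, v₂⟫),
    key (-⟪c, v₁⟫) ⟪c, v₂⟫, key (-⟪c, v₁⟫) (-⟪c, v₂⟫)]
  calc |⟪c, v₁⟫| ^ m * |⟪c, v₂⟫| ^ i * Real.exp (⟪c, w⟫ - ‖c‖ ^ 2 / (2 * θ))
      ≤ (m.factorial * Real.exp |⟪c, v₁⟫|) * (i.factorial * Real.exp |⟪c, v₂⟫|)
        * Real.exp (⟪c, w⟫ - ‖c‖ ^ 2 / (2 * θ)) :=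
        mul_le_mul_of_nonneg_right
          (mul_le_mul (MB_pow_le _ _) (MB_pow_le _ _) (by positivity) (by positivity))
          (Real.exp_pos _).le
    _ = ((m.factorial : ℝ) * i.factorial)
          * (Real.exp |⟪c, v₁⟫| * Real.exp |⟪c, v₂⟫|
            * Real.exp (⟪c, w⟫ - ‖c‖ ^ 2 / (2 * θ))) := by ring
    _ ≤ ((m.factorial : ℝ) * i.factorial)
          * ((Real.exp ⟪c, v₁⟫ + Real.exp (-⟪c, v₁⟫))
            * (Real.exp ⟪c, v₂⟫ + Real.exp (-⟪c, v₂⟫))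
            * Real.exp (⟪c, w⟫ - ‖c‖ ^ 2 / (2 * θ))) := by
        refine mul_le_mul_of_nonneg_left ?_ (by positivity)
        refine mul_le_mul_of_nonneg_right ?_ (Real.exp_pos _).le
        exact mul_le_mul (MB_exp_abs_le _) (MB_exp_abs_le _) (Real.exp_pos _).le (by positivity)
    _ = _ := by ring

/-- centered Gaussian factor -/
noncomputable def MBEc (D : ℕ) (θ : ℝ) (c : EuclideanSpace ℝ (Fin D)) : ℝ :=
  (2 * π * θ) ^ (-(D : ℝ) / 2) * Real.exp (-‖c‖ ^ 2 / (2 * θ))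

lemma MBEc_nonneg {D : ℕ} {θ : ℝ} (hθ : 0 < θ) (c : EuclideanSpace ℝ (Fin D)) :
    0 ≤ MBEc D θ c := by
  unfold MBEc
  have : (0:ℝ) < 2 * π * θ := by positivity
  positivity

lemma MB_integrable_poly' {D : ℕ} {θ : ℝ} (hθ : 0 < θ) (m i : ℕ)
    (v₁ v₂ w : EuclideanSpace ℝ (Fin D)) :
    Integrable (fun c : EuclideanSpace ℝ (Fin D) =>
      ⟪c, v₁⟫ ^ m * ⟪c, v₂⟫ ^ i * Real.exp (⟪c, w⟫ - ‖c‖ ^ 2 / (2 * θ))) := by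
  have hc1 : Continuous fun c : EuclideanSpace ℝ (Fin D) => ⟪c, v₁⟫ :=
    continuous_id.inner continuous_const
  have hc2 : Continuous fun c : EuclideanSpace ℝ (Fin D) => ⟪c, v₂⟫ :=
    continuous_id.inner continuous_const
  have hc3 : Continuous fun c : EuclideanSpace ℝ (Fin D) => ⟪c, w⟫ :=
    continuous_id.inner continuous_const
  refine (MB_integrable_poly hθ m i v₁ v₂ w).mono' (Continuous.aestronglyMeasurable
    (((hc1.pow m).mul (hc2.pow i)).mul
      (Real.continuous_exp.comp (hc3.sub ((continuous_norm.pow 2).div_const (2 * θ)))))) ?_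
  filter_upwards with c
  rw [Real.norm_eq_abs, abs_mul, abs_mul, abs_pow, abs_pow, Real.abs_exp]

lemma MB_integrable_base {D : ℕ} {θ : ℝ} (hθ : 0 < θ) (m i : ℕ)
    (v₁ v₂ : EuclideanSpace ℝ (Fin D)) :
    Integrable (fun c : EuclideanSpace ℝ (Fin D) =>
      ⟪c, v₁⟫ ^ m * ⟪c, v₂⟫ ^ i * Real.exp (-‖c‖ ^ 2 / (2 * θ))) := by
  apply (MB_integrable_poly' hθ m i v₁ v₂ 0).congr
  filter_upwards with c
  rw [inner_zero_right, zero_sub, neg_div]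

lemma MB_integrable_PE {D : ℕ} {θ : ℝ} (hθ : 0 < θ) (j : ℕ)
    (v : EuclideanSpace ℝ (Fin D)) :
    Integrable (fun c : EuclideanSpace ℝ (Fin D) => ⟪c, v⟫ ^ j * MBEc D θ c) := by
  apply ((MB_integrable_base hθ j 0 v 0).const_mul ((2 * π * θ) ^ (-(D : ℝ) / 2))).congr
  filter_upwards with c
  unfold MBEc
  ring

lemma MB_integrable_F {D : ℕ} {θ : ℝ} (hθ : 0 < θ) (m : ℕ)
    (u v : EuclideanSpace ℝ (Fin D)) (t : ℝ) (n : ℕ) :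
    Integrable (fun c : EuclideanSpace ℝ (Fin D) =>
      (⟪c, v⟫ ^ m * MBEc D θ c)
        * (MBdco (⟪c, u⟫ / θ) (-‖u‖ ^ 2 / (2 * θ)) n * t ^ n)) := by
  have heq : (fun c : EuclideanSpace ℝ (Fin D) =>
      (⟪c, v⟫ ^ m * MBEc D θ c)
        * (MBdco (⟪c, u⟫ / θ) (-‖u‖ ^ 2 / (2 * θ)) n * t ^ n))
      = fun c => ∑ kl ∈ Finset.HasAntidiagonal.antidiagonal n,
        ((2 * π * θ) ^ (-(D : ℝ) / 2)
          * ((if Even kl.2 then (-‖u‖ ^ 2 / (2 * θ)) ^ (kl.2 / 2) / (kl.2 / 2).factorial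
              else 0) / kl.1.factorial) * t ^ n * (θ ^ kl.1)⁻¹)
          * (⟪c, v⟫ ^ m * ⟪c, u⟫ ^ kl.1 * Real.exp (-‖c‖ ^ 2 / (2 * θ))) := by
    funext c
    rw [MBdco, Finset.sum_mul, Finset.mul_sum]
    refine Finset.sum_congr rfl fun kl _ => ?_
    rw [div_pow]
    unfold MBEc
    ring
  rw [heq]
  exact integrable_finset_sum _ fun kl _ => (MB_integrable_base hθ m kl.1 v u).const_mul _

lemma MB_summable_F {D : ℕ} {θ : ℝ} (hθ : 0 < θ) (m : ℕ)
    (u v : EuclideanSpace ℝ (Fin D)) (t : ℝ) :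
    Summable (fun n : ℕ => ∫ c : EuclideanSpace ℝ (Fin D),
      ‖(⟪c, v⟫ ^ m * MBEc D θ c)
        * (MBdco (⟪c, u⟫ / θ) (-‖u‖ ^ 2 / (2 * θ)) n * t ^ n)‖) := by
  set g : ℝ := -‖u‖ ^ 2 / (2 * θ) with hg_def
  set s : ℝ := |t| + 1 with hs_def
  have hs0 : (0:ℝ) < s := by positivity
  have hts : |t| < s := by rw [hs_def]; linarith
  set q : ℝ := |t| / s with hq_def
  have hq0 : 0 ≤ q := by positivity
  have hq1 : q < 1 := (div_lt_one hs0).mpr hts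
  have hqs : q * s = |t| := by rw [hq_def]; field_simp
  set K : ℝ := (2 * π * θ) ^ (-(D : ℝ) / 2) with hK_def
  have hK0 : (0:ℝ) < K := by
    have : (0:ℝ) < 2 * π * θ := by positivity
    positivity
  set wp : EuclideanSpace ℝ (Fin D) := (s / θ) • u with hwp_def
  have hD1 : Integrable (fun c : EuclideanSpace ℝ (Fin D) =>
      |⟪c, v⟫| ^ m * Real.exp (⟪c, wp⟫ - ‖c‖ ^ 2 / (2 * θ))) := by
    apply (MB_integrable_poly hθ m 0 v 0 wp).congr
    filter_upwards with c
    rw [pow_zero, mul_one]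
  have hD2 : Integrable (fun c : EuclideanSpace ℝ (Fin D) =>
      |⟪c, v⟫| ^ m * Real.exp (⟪c, -wp⟫ - ‖c‖ ^ 2 / (2 * θ))) := by
    apply (MB_integrable_poly hθ m 0 v 0 (-wp)).congr
    filter_upwards with c
    rw [pow_zero, mul_one]
  set Dom : EuclideanSpace ℝ (Fin D) → ℝ := fun c => (K * Real.exp (|g| * s ^ 2)) *
      (|⟪c, v⟫| ^ m * Real.exp (⟪c, wp⟫ - ‖c‖ ^ 2 / (2 * θ))
        + |⟪c, v⟫| ^ m * Real.exp (⟪c, -wp⟫ - ‖c‖ ^ 2 / (2 * θ))) with hDom_def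
  have hDom : Integrable Dom := (hD1.add hD2).const_mul _
  have hpt : ∀ (n : ℕ) (c : EuclideanSpace ℝ (Fin D)),
      ‖(⟪c, v⟫ ^ m * MBEc D θ c) * (MBdco (⟪c, u⟫ / θ) g n * t ^ n)‖
        ≤ q ^ n * Dom c := by
    intro n c
    set b : ℝ := ⟪c, u⟫ / θ with hb_def
    have hip : ⟪c, wp⟫ = b * s := by
      rw [hwp_def, real_inner_smul_right, hb_def]
      field_simp
    have hipm : ⟪c, -wp⟫ = -(b * s) := by
      rw [inner_neg_right, hip]
    have step1 : ‖(⟪c, v⟫ ^ m * MBEc D θ c) * (MBdco b g n * t ^ n)‖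
        = |⟪c, v⟫| ^ m * MBEc D θ c * (|MBdco b g n| * |t| ^ n) := by
      rw [Real.norm_eq_abs, abs_mul, abs_mul, abs_mul, abs_pow, abs_pow,
        abs_of_nonneg (MBEc_nonneg hθ c)]
    rw [step1]
    have step2 : |MBdco b g n| * |t| ^ n ≤ MBdco |b| |g| n * s ^ n * q ^ n := by
      rw [← hqs, mul_pow]
      calc |MBdco b g n| * (q ^ n * s ^ n)
          ≤ MBdco |b| |g| n * (q ^ n * s ^ n) :=
            mul_le_mul_of_nonneg_right (abs_MBdco_le b g n) (by positivity)
        _ = MBdco |b| |g| n * s ^ n * q ^ n := by ring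
    have step3 : MBdco |b| |g| n * s ^ n ≤ Real.exp (|b| * s + |g| * s ^ 2) :=
      MBdco_mul_pow_le (abs_nonneg _) (abs_nonneg _) hs0.le n
    have step4 : Real.exp (|b| * s) ≤ Real.exp (b * s) + Real.exp (-(b * s)) := by
      have := MB_exp_abs_le (b * s)
      rwa [abs_mul, abs_of_nonneg hs0.le] at this
    calc |⟪c, v⟫| ^ m * MBEc D θ c * (|MBdco b g n| * |t| ^ n)
        ≤ |⟪c, v⟫| ^ m * MBEc D θ c * (MBdco |b| |g| n * s ^ n * q ^ n) := by
          apply mul_le_mul_of_nonneg_left step2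
          exact mul_nonneg (by positivity) (MBEc_nonneg hθ c)
      _ ≤ |⟪c, v⟫| ^ m * MBEc D θ c * (Real.exp (|b| * s + |g| * s ^ 2) * q ^ n) := by
          apply mul_le_mul_of_nonneg_left ?_
            (mul_nonneg (by positivity) (MBEc_nonneg hθ c))
          exact mul_le_mul_of_nonneg_right step3 (by positivity)
      _ = (|⟪c, v⟫| ^ m * MBEc D θ c * Real.exp (|b| * s) * Real.exp (|g| * s ^ 2)) * q ^ n := by
          rw [Real.exp_add]
          ring
      _ ≤ (|⟪c, v⟫| ^ m * MBEc D θ c * (Real.exp (b * s) + Real.exp (-(b * s)))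
            * Real.exp (|g| * s ^ 2)) * q ^ n := by
          apply mul_le_mul_of_nonneg_right ?_ (by positivity)
          apply mul_le_mul_of_nonneg_right ?_ (Real.exp_pos _).le
          exact mul_le_mul_of_nonneg_left step4
            (mul_nonneg (by positivity) (MBEc_nonneg hθ c))
      _ = q ^ n * Dom c := by
          rw [hDom_def]
          have e1 : MBEc D θ c * Real.exp (b * s) = K * Real.exp (⟪c, wp⟫ - ‖c‖ ^ 2 / (2 * θ)) := by
            rw [hip]
            unfold MBEc
            rw [hK_def, mul_assoc, ← Real.exp_add]
            congr 2
            ring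
          have e2 : MBEc D θ c * Real.exp (-(b * s))
              = K * Real.exp (⟪c, -wp⟫ - ‖c‖ ^ 2 / (2 * θ)) := by
            rw [hipm]
            unfold MBEc
            rw [hK_def, mul_assoc, ← Real.exp_add]
            congr 2
            ring
          calc |⟪c, v⟫| ^ m * MBEc D θ c * (Real.exp (b * s) + Real.exp (-(b * s)))
                * Real.exp (|g| * s ^ 2) * q ^ n
              = (|⟪c, v⟫| ^ m * (MBEc D θ c * Real.exp (b * s))
                  + |⟪c, v⟫| ^ m * (MBEc D θ c * Real.exp (-(b * s))))
                * Real.exp (|g| * s ^ 2) * q ^ n := by ring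
            _ = _ := by rw [e1, e2]; ring
  have hbound : ∀ n : ℕ, (∫ c : EuclideanSpace ℝ (Fin D),
      ‖(⟪c, v⟫ ^ m * MBEc D θ c) * (MBdco (⟪c, u⟫ / θ) g n * t ^ n)‖)
        ≤ (∫ c, Dom c) * q ^ n := by
    intro n
    calc (∫ c : EuclideanSpace ℝ (Fin D),
        ‖(⟪c, v⟫ ^ m * MBEc D θ c) * (MBdco (⟪c, u⟫ / θ) g n * t ^ n)‖)
        ≤ ∫ c : EuclideanSpace ℝ (Fin D), q ^ n * Dom c := by
          refine integral_mono_of_nonneg (Filter.Eventually.of_forall fun c => norm_nonneg _)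
            (hDom.const_mul _) (Filter.Eventually.of_forall fun c => hpt n c)
      _ = (∫ c, Dom c) * q ^ n := by
          rw [integral_const_mul]
          ring
  refine Summable.of_nonneg_of_le (fun n => integral_nonneg fun c => norm_nonneg _)
    hbound ?_
  exact (summable_geometric_of_lt_one hq0 hq1).mul_left _

lemma MB_hasSum_A {D : ℕ} {θ : ℝ} (hθ : 0 < θ) (m : ℕ)
    (u v : EuclideanSpace ℝ (Fin D)) (t : ℝ) :
    HasSum (fun n : ℕ => (∫ c : EuclideanSpace ℝ (Fin D),
        (⟪c, v⟫ ^ m * MBEc D θ c) * MBdco (⟪c, u⟫ / θ) (-‖u‖ ^ 2 / (2 * θ)) n) * t ^ n)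
      (∫ c : EuclideanSpace ℝ (Fin D), ⟪c, v⟫ ^ m * maxwellBoltzmann D θ (t • u) c) := by
  have hint := fun n => MB_integrable_F hθ m u v t n
  have hsum := MB_summable_F hθ m u v t
  have H := MeasureTheory.hasSum_integral_of_summable_integral_norm hint hsum
  have h1 : ∀ n : ℕ, (∫ c : EuclideanSpace ℝ (Fin D),
      (⟪c, v⟫ ^ m * MBEc D θ c) * (MBdco (⟪c, u⟫ / θ) (-‖u‖ ^ 2 / (2 * θ)) n * t ^ n))
      = (∫ c : EuclideanSpace ℝ (Fin D),
        (⟪c, v⟫ ^ m * MBEc D θ c) * MBdco (⟪c, u⟫ / θ) (-‖u‖ ^ 2 / (2 * θ)) n) * t ^ n := by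
    intro n
    rw [← integral_mul_const]
    congr 1
    funext c
    ring
  have h2 : (∫ c : EuclideanSpace ℝ (Fin D), ∑' n : ℕ,
      (⟪c, v⟫ ^ m * MBEc D θ c) * (MBdco (⟪c, u⟫ / θ) (-‖u‖ ^ 2 / (2 * θ)) n * t ^ n))
      = ∫ c : EuclideanSpace ℝ (Fin D), ⟪c, v⟫ ^ m * maxwellBoltzmann D θ (t • u) c := by
    congr 1
    funext c
    have hd := (MB_hasSum_dco (⟪c, u⟫ / θ) (-‖u‖ ^ 2 / (2 * θ)) t).mul_left
      (⟪c, v⟫ ^ m * MBEc D θ c)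
    rw [hd.tsum_eq, MB_decomp D hθ u c t]
    unfold MBEc
    ring
  rw [funext h1, h2] at H
  exact H

lemma MB_phi_poly {D : ℕ} {θ : ℝ} (hθ : 0 < θ) (m : ℕ)
    (u v : EuclideanSpace ℝ (Fin D)) (t : ℝ) :
    (∫ c : EuclideanSpace ℝ (Fin D), ⟪c, v⟫ ^ m * maxwellBoltzmann D θ (t • u) c)
      = ∑ k ∈ Finset.range (m + 1),
        ((m.choose k : ℝ) * ⟪u, v⟫ ^ k
          * (∫ c : EuclideanSpace ℝ (Fin D), ⟪c, v⟫ ^ (m - k) * MBEc D θ c)) * t ^ k := by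
  have htrans : (∫ c : EuclideanSpace ℝ (Fin D), ⟪c, v⟫ ^ m * maxwellBoltzmann D θ (t • u) c)
      = ∫ c : EuclideanSpace ℝ (Fin D),
        ⟪c + t • u, v⟫ ^ m * maxwellBoltzmann D θ (t • u) (c + t • u) :=
    (integral_add_right_eq_self
      (fun c => ⟪c, v⟫ ^ m * maxwellBoltzmann D θ (t • u) c) (t • u)).symm
  have hpt : ∀ c : EuclideanSpace ℝ (Fin D),
      ⟪c + t • u, v⟫ ^ m * maxwellBoltzmann D θ (t • u) (c + t • u)
        = ∑ k ∈ Finset.range (m + 1),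
          ((m.choose k : ℝ) * ⟪u, v⟫ ^ k * t ^ k) * (⟪c, v⟫ ^ (m - k) * MBEc D θ c) := by
    intro c
    have hmb : maxwellBoltzmann D θ (t • u) (c + t • u) = MBEc D θ c := by
      unfold maxwellBoltzmann MBEc
      rw [add_sub_cancel_right]
    have hin : ⟪c + t • u, v⟫ = t * ⟪u, v⟫ + ⟪c, v⟫ := by
      rw [inner_add_left, real_inner_smul_left]
      ring
    rw [hmb, hin, add_pow, Finset.sum_mul]
    refine Finset.sum_congr rfl fun k hk => ?_
    rw [mul_pow]
    ring
  rw [htrans]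
  rw [integral_congr_ae (Filter.Eventually.of_forall hpt)]
  rw [integral_finset_sum _ fun k _ =>
    ((MB_integrable_PE hθ (m - k) v).const_mul ((m.choose k : ℝ) * ⟪u, v⟫ ^ k * t ^ k))]
  refine Finset.sum_congr rfl fun k hk => ?_
  rw [integral_const_mul]
  ring

lemma MB_ofScalars_norm (c : ℕ → ℝ) (k : ℕ) :
    ‖FormalMultilinearSeries.ofScalars ℝ c k‖ = |c k| := by
  have hpk : FormalMultilinearSeries.ofScalars ℝ c k
      = (c k) • ContinuousMultilinearMap.mkPiAlgebraFin ℝ k ℝ := rfl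
  rw [hpk, norm_smul (c k) (ContinuousMultilinearMap.mkPiAlgebraFin ℝ k ℝ),
    ContinuousMultilinearMap.norm_mkPiAlgebraFin, mul_one, Real.norm_eq_abs]

lemma MB_ofScalars_coeff (c : ℕ → ℝ) (k : ℕ) :
    (FormalMultilinearSeries.ofScalars ℝ c).coeff k = c k := by
  simp [FormalMultilinearSeries.coeff, FormalMultilinearSeries.ofScalars, smul_eq_mul,
    Pi.one_def, List.ofFn_const, List.prod_replicate, one_pow]

/-- Moments of the Maxwell–Boltzmann distribution up to order `N` are unchanged
by the `N`-th order truncation in the fluid velocity: for `m ≤ N`,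
`∫ (c·v)^m f^{eq,(N)}_u(c) dc = ∫ (c·v)^m f^eq_u(c) dc`. -/
theorem truncated_continuum_moments_eq
    (D : ℕ) (hD : 1 ≤ D) (θ : ℝ) (hθ : 0 < θ) (N : ℕ)
    (u v : EuclideanSpace ℝ (Fin D)) :
    ∀ m : ℕ, m ≤ N →
      ∫ c : EuclideanSpace ℝ (Fin D), (inner ℝ c v : ℝ) ^ m * maxwellBoltzmannTrunc D θ N u c =
        ∫ c : EuclideanSpace ℝ (Fin D), (inner ℝ c v : ℝ) ^ m * maxwellBoltzmann D θ u c := by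
  intro m hm
  set g : ℝ := -‖u‖ ^ 2 / (2 * θ) with hg_def
  have trunc_eq : ∀ c : EuclideanSpace ℝ (Fin D), maxwellBoltzmannTrunc D θ N u c
      = ∑ n ∈ Finset.range (N + 1), MBEc D θ c * MBdco (⟪c, u⟫ / θ) g n := by
    intro c
    unfold maxwellBoltzmannTrunc
    refine Finset.sum_congr rfl fun n _ => ?_
    have hfeq : (fun t : ℝ => maxwellBoltzmann D θ (t • u) c)
        = fun t => MBEc D θ c * Real.exp ((⟪c, u⟫ / θ) * t + g * t ^ 2) :=
      funext fun t => by rw [MB_decomp D hθ u c t]; rfl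
    rw [hfeq, MB_iteratedDeriv]
    have hnf : (n.factorial : ℝ) ≠ 0 := by positivity
    field_simp
  have lhs_eq : (∫ c : EuclideanSpace ℝ (Fin D),
        ⟪c, v⟫ ^ m * maxwellBoltzmannTrunc D θ N u c)
      = ∑ n ∈ Finset.range (N + 1), ∫ c : EuclideanSpace ℝ (Fin D),
          (⟪c, v⟫ ^ m * MBEc D θ c) * MBdco (⟪c, u⟫ / θ) g n := by
    have hfeq2 : (fun c : EuclideanSpace ℝ (Fin D) =>
        ⟪c, v⟫ ^ m * maxwellBoltzmannTrunc D θ N u c)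
        = fun c => ∑ n ∈ Finset.range (N + 1),
            (⟪c, v⟫ ^ m * MBEc D θ c) * MBdco (⟪c, u⟫ / θ) g n := by
      funext c
      rw [trunc_eq c, Finset.mul_sum]
      exact Finset.sum_congr rfl fun n _ => by ring
    rw [hfeq2]
    refine integral_finset_sum _ fun n _ => ?_
    apply (MB_integrable_F hθ m u v 1 n).congr
    filter_upwards with c
    rw [one_pow, mul_one]
  set A : ℕ → ℝ := fun n => ∫ c : EuclideanSpace ℝ (Fin D),
      (⟪c, v⟫ ^ m * MBEc D θ c) * MBdco (⟪c, u⟫ / θ) g n with hA_def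
  set a' : ℕ → ℝ := fun k => if k ≤ m then (m.choose k : ℝ) * ⟪u, v⟫ ^ k
      * (∫ c : EuclideanSpace ℝ (Fin D), ⟪c, v⟫ ^ (m - k) * MBEc D θ c) else 0 with ha_def
  have hΦ1 : ∀ t : ℝ, HasSum (fun n => A n * t ^ n)
      (∫ c : EuclideanSpace ℝ (Fin D), ⟪c, v⟫ ^ m * maxwellBoltzmann D θ (t • u) c) :=
    fun t => MB_hasSum_A hθ m u v t
  have hval : ∀ t : ℝ, ∑ k ∈ Finset.range (m + 1), a' k * t ^ k
      = ∫ c : EuclideanSpace ℝ (Fin D), ⟪c, v⟫ ^ m * maxwellBoltzmann D θ (t • u) c := by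
    intro t
    rw [MB_phi_poly hθ m u v t]
    refine Finset.sum_congr rfl fun k hk => ?_
    rw [ha_def]
    simp only
    rw [if_pos (Nat.lt_succ_iff.mp (Finset.mem_range.mp hk))]
  have hΦ2 : ∀ t : ℝ, HasSum (fun k => a' k * t ^ k)
      (∫ c : EuclideanSpace ℝ (Fin D), ⟪c, v⟫ ^ m * maxwellBoltzmann D θ (t • u) c) := by
    intro t
    have hz : ∀ k ∉ Finset.range (m + 1), a' k * t ^ k = 0 := by
      intro k hk
      rw [ha_def]
      simp only
      rw [if_neg (by simp only [Finset.mem_range] at hk; omega), zero_mul]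
    have hs := hasSum_sum_of_ne_finset_zero (L := SummationFilter.unconditional ℕ) hz
    rwa [hval t] at hs
  have hps1 : HasFPowerSeriesOnBall
      (fun t : ℝ => ∫ c : EuclideanSpace ℝ (Fin D),
        ⟪c, v⟫ ^ m * maxwellBoltzmann D θ (t • u) c)
      (FormalMultilinearSeries.ofScalars ℝ A) 0 ⊤ := by
    constructor
    · refine le_of_eq ((FormalMultilinearSeries.ofScalars ℝ A).radius_eq_top_of_summable_norm
        ?_).symm
      intro r
      refine Summable.of_nonneg_of_le (fun n => by positivity) (fun n => ?_)
        (MB_summable_F hθ m u v (r : ℝ))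
      rw [MB_ofScalars_norm]
      calc |A n| * (r : ℝ) ^ n = |A n * (r : ℝ) ^ n| := by
            rw [abs_mul, abs_pow, abs_of_nonneg r.coe_nonneg]
        _ = |∫ c : EuclideanSpace ℝ (Fin D),
              (⟪c, v⟫ ^ m * MBEc D θ c) * (MBdco (⟪c, u⟫ / θ) g n * (r : ℝ) ^ n)| := by
            rw [hA_def]
            simp only
            rw [← integral_mul_const]
            congr 1
            refine integral_congr_ae (Filter.Eventually.of_forall fun c => ?_)
            ring
        _ ≤ _ := by
            rw [← Real.norm_eq_abs]
            exact norm_integral_le_integral_norm _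
    · simp
    · intro y _
      simpa [MB_ofScalars_coeff, smul_eq_mul, mul_comm, mul_left_comm] using hΦ1 y
  have hps2 : HasFPowerSeriesOnBall
      (fun t : ℝ => ∫ c : EuclideanSpace ℝ (Fin D),
        ⟪c, v⟫ ^ m * maxwellBoltzmann D θ (t • u) c)
      (FormalMultilinearSeries.ofScalars ℝ a') 0 ⊤ := by
    constructor
    · refine le_of_eq (FormalMultilinearSeries.radius_eq_top_of_forall_image_add_eq_zero _
        (m + 1) fun k => ?_).symm
      apply FormalMultilinearSeries.ofScalars_eq_zero_of_scalar_zero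
      rw [ha_def]
      simp only
      rw [if_neg (by omega)]
    · simp
    · intro y _
      simpa [MB_ofScalars_coeff, smul_eq_mul, mul_comm, mul_left_comm] using hΦ2 y
  have huniq := hps1.hasFPowerSeriesAt.eq_formalMultilinearSeries hps2.hasFPowerSeriesAt
  have hAa : ∀ n, A n = a' n := by
    intro n
    have h := congrArg (fun p : FormalMultilinearSeries ℝ ℝ ℝ => p.coeff n) huniq
    simpa [MB_ofScalars_coeff] using h
  calc (∫ c : EuclideanSpace ℝ (Fin D), ⟪c, v⟫ ^ m * maxwellBoltzmannTrunc D θ N u c)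
      = ∑ n ∈ Finset.range (N + 1), A n := lhs_eq
    _ = ∑ n ∈ Finset.range (N + 1), a' n := Finset.sum_congr rfl fun n _ => hAa n
    _ = ∑ k ∈ Finset.range (m + 1), a' k := by
        refine (Finset.sum_subset (Finset.range_subset_range.mpr (by omega)) fun x _ hx => ?_).symm
        rw [ha_def]
        simp only
        rw [if_neg (by simp only [Finset.mem_range] at hx; omega)]
    _ = ∑ k ∈ Finset.range (m + 1), a' k * (1 : ℝ) ^ k := by simp
    _ = ∫ c : EuclideanSpace ℝ (Fin D), ⟪c, v⟫ ^ m * maxwellBoltzmann D θ ((1:ℝ) • u) c :=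
        hval 1
    _ = ∫ c : EuclideanSpace ℝ (Fin D), ⟪c, v⟫ ^ m * maxwellBoltzmann D θ u c := by
        rw [one_smul]
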